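/- arXiv:2605.25392 — 4 statements merged into one kernel-verified Lean document; each statement's English description precedes it below -/
import Mathlib

section
/- Let c > 0, m ∈ ℝ, ρ > 0, T > 0, and define δ(t) = c·m·((c+ρ)(1 - e^{t-T}) - ρ·e^{t-T}(T-t)) / (c + (1-e^{t-T})ρ) and P(t) = c·e^{t-T}/(c + (1-e^{t-T})ρ). Then δ satisfies the linear ODE δ'(t) = δ(t)·(ρ·P(t)/c + 1) - c·m with terminal condition δ(T) = 0. -/
open Real

theorem delta_linear_ode
    (c m ρ T : ℝ) (hc : 0 < c) (hρ : 0 < ρ) (hT : 0 < T)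
    (δ P : ℝ → ℝ)
    (hδ : ∀ t, δ t = c * m * ((c + ρ) * (1 - exp (t - T)) - ρ * exp (t - T) * (T - t))
        / (c + (1 - exp (t - T)) * ρ))
    (hP : ∀ t, P t = c * exp (t - T) / (c + (1 - exp (t - T)) * ρ)) :
    δ T = 0 ∧
    ∀ t ∈ Set.Icc (0:ℝ) T,
      HasDerivAt δ (δ t * (ρ * P t / c + 1) - c * m) t := by
  constructor
  · rw [hδ T]
    simp
  · intro t ht
    have he : HasDerivAt (fun s => exp (s - T)) (exp (t - T)) t := by
      simpa using ((hasDerivAt_id t).sub_const T).exp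
    set e := exp (t - T) with he_def
    have hDpos : 0 < c + (1 - e) * ρ := by
      have h1 : e ≤ 1 := by
        rw [he_def]
        have h0 : t - T ≤ 0 := by linarith [ht.2]
        calc exp (t - T) ≤ exp 0 := exp_le_exp.2 h0
        _ = 1 := exp_zero
      nlinarith
    have hDne : c + (1 - e) * ρ ≠ 0 := ne_of_gt hDpos
    have hN : HasDerivAt
        (fun s => c * m * ((c + ρ) * (1 - exp (s - T)) - ρ * exp (s - T) * (T - s)))
        (c * m * ((c + ρ) * (0 - e) - ((ρ * e) * (T - t) + (ρ * e) * (0 - 1)))) t := by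
      exact (((hasDerivAt_const t (1:ℝ)).sub he).const_mul (c + ρ) |>.sub
        ((he.const_mul ρ).mul ((hasDerivAt_const t T).sub (hasDerivAt_id t)))).const_mul (c * m)
    have hD : HasDerivAt (fun s => c + (1 - exp (s - T)) * ρ) (0 + (0 - e) * ρ) t := by
      exact (hasDerivAt_const t c).add (((hasDerivAt_const t (1:ℝ)).sub he).mul_const ρ)
    have hQ : HasDerivAt (fun s => c * m * ((c + ρ) * (1 - exp (s - T)) - ρ * exp (s - T) * (T - s))
        / (c + (1 - exp (s - T)) * ρ)) _ t := hN.div hD hDne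
    have hfun : δ = fun s => c * m * ((c + ρ) * (1 - exp (s - T)) - ρ * exp (s - T) * (T - s))
        / (c + (1 - exp (s - T)) * ρ) := funext hδ
    rw [hfun]
    convert hQ using 1
    simp only [hP t, ← he_def]
    beta_reduce
    rw [div_eq_mul_inv _ ((c + (1 - e) * ρ) ^ 2), ← inv_pow]
    linear_combination (c * m * ((c + ρ) * (1 - e) - ρ * e * (T - t)) * ρ * e * ((c + (1 - e) * ρ)⁻¹) ^ 2) * (mul_inv_cancel₀ hc.ne') + (c * m - c * m * ((c + ρ) * (0 - e) - (ρ * e * (T - t) + ρ * e * (0 - 1))) * (c + (1 - e) * ρ)⁻¹) * (mul_inv_cancel₀ hDne)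
end

section
/- Let c : [0,T] → ℝ be continuous with c ≥ ε > 0, ρ > 0, and let P solve P' = P(ρP/c + 1), P(T) = 1, with H(t) = ∫_0^t(ρP/c + 1)ds. Then ρ·∫_0^T (e^{-s}/c(s))·P(s)² ds = e^{-T} - P(0). -/
open Real MeasureTheory intervalIntegral

theorem riccati_integral_identity
    (T ρ ε : ℝ) (hT : 0 < T) (hρ : 0 < ρ) (hε : 0 < ε)
    (c : ℝ → ℝ) (hcc : ContinuousOn c (Set.Icc 0 T))
    (hcε : ∀ t ∈ Set.Icc (0:ℝ) T, ε ≤ c t)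
    (P : ℝ → ℝ) (hPT : P T = 1)
    (hPode : ∀ t ∈ Set.Icc (0:ℝ) T,
      HasDerivAt P (P t * (ρ * P t / c t + 1)) t) :
    ρ * ∫ s in (0:ℝ)..T, (exp (-s) / c s) * (P s) ^ 2 = exp (-T) - P 0 := by
  have hPc : ContinuousOn P (Set.Icc 0 T) := fun t ht =>
    (hPode t ht).continuousAt.continuousWithinAt
  have hc0 : ∀ t ∈ Set.Icc (0:ℝ) T, c t ≠ 0 := fun t ht =>
    (lt_of_lt_of_le hε (hcε t ht)).ne'
  have key : ∀ t ∈ Set.uIcc (0:ℝ) T,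
      HasDerivAt (fun s => exp (-s) * P s)
        (ρ * ((exp (-t) / c t) * (P t) ^ 2)) t := by
    intro t ht
    rw [Set.uIcc_of_le hT.le] at ht
    have h1 : HasDerivAt (fun s : ℝ => exp (-s)) (-exp (-t)) t := by
      simpa using (hasDerivAt_neg t).exp
    have h2 := h1.mul (hPode t ht)
    refine h2.congr_deriv ?_
    ring
  have hcont : ContinuousOn (fun t => ρ * ((exp (-t) / c t) * (P t) ^ 2))
      (Set.uIcc 0 T) := by
    rw [Set.uIcc_of_le hT.le]
    exact continuousOn_const.mul
      ((((Real.continuous_exp.comp continuous_neg).continuousOn).div hcc hc0).mul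
        (hPc.pow 2))
  have hint : IntervalIntegrable (fun t => ρ * ((exp (-t) / c t) * (P t) ^ 2)) volume 0 T := hcont.intervalIntegrable
  have heq := intervalIntegral.integral_eq_sub_of_hasDerivAt key hint
  rw [intervalIntegral.integral_const_mul] at heq
  rw [heq, hPT]
  simp
end

section
/- Let c : [0,T] → ℝ be continuous with c ≥ ε > 0, ρ > 0, P the solution of P' = P(ρP/c+1), P(T)=1, H(t) = ∫_0^t(ρP/c+1)ds, and α(T) = e^{-H(T)+T}∫_0^T (e^{-s}/c(s))e^{H(s)}P(s) ds. Then 1 - ρ·α(T) = e^T·P(0), and in particular 1 - ρ·α(T) > 0. -/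
open Real MeasureTheory intervalIntegral

theorem supply_curve_slope_identity
    (T ρ ε : ℝ) (hT : 0 < T) (hρ : 0 < ρ) (hε : 0 < ε)
    (c : ℝ → ℝ) (hcc : ContinuousOn c (Set.Icc 0 T))
    (hcε : ∀ t ∈ Set.Icc (0:ℝ) T, ε ≤ c t)
    (P : ℝ → ℝ) (hPT : P T = 1)
    (hPode : ∀ t ∈ Set.Icc (0:ℝ) T,
      HasDerivAt P (P t * (ρ * P t / c t + 1)) t)
    (H : ℝ → ℝ)
    (hH : ∀ t, H t = ∫ s in (0:ℝ)..t, (ρ * P s / c s + 1))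
    (α : ℝ)
    (hα : α = exp (-(H T) + T) * ∫ s in (0:ℝ)..T, (exp (-s) / c s) * exp (H s) * P s) :
    1 - ρ * α = exp T * P 0 ∧ 0 < 1 - ρ * α := by
  have hIcc : Set.uIcc (0:ℝ) T = Set.Icc 0 T := Set.uIcc_of_le hT.le
  have hc0 : ∀ t ∈ Set.Icc (0:ℝ) T, (0:ℝ) < c t := fun t ht => lt_of_lt_of_le hε (hcε t ht)
  have hcne : ∀ t ∈ Set.Icc (0:ℝ) T, c t ≠ 0 := fun t ht => (hc0 t ht).ne'
  have hPc : ContinuousOn P (Set.Icc 0 T) := fun x hx =>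
    (hPode x hx).continuousAt.continuousWithinAt
  set f : ℝ → ℝ := fun s => ρ * P s / c s + 1 with hf
  have hfc : ContinuousOn f (Set.Icc 0 T) :=
    ((continuousOn_const.mul hPc).div hcc hcne).add continuousOn_const
  have hHeq : H = fun t => ∫ s in (0:ℝ)..t, f s := funext hH
  have hH0 : H 0 = 0 := by rw [hH]; simp
  have hfint : IntervalIntegrable f volume 0 T :=
    ContinuousOn.intervalIntegrable (by rw [hIcc]; exact hfc)
  have hHc : ContinuousOn H (Set.Icc 0 T) := by
    rw [hHeq, ← hIcc]
    exact continuousOn_primitive_interval (hIcc ▸ hfc.integrableOn_compact isCompact_Icc)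
  -- derivative of H within Ici x for x ∈ Ico 0 T
  have hHd : ∀ x ∈ Set.Ico (0:ℝ) T, HasDerivWithinAt H (f x) (Set.Ici x) x := by
    intro x hx
    rw [hHeq]
    rcases eq_or_lt_of_le hx.1 with h0 | h0
    · subst h0
      have hmem : Set.Icc (0:ℝ) T ∈ nhdsWithin (0:ℝ) (Set.Ioi 0) := by
        filter_upwards [Filter.inter_mem self_mem_nhdsWithin
          (nhdsWithin_le_nhds (Iio_mem_nhds hx.2))] with y hy
        exact ⟨le_of_lt hy.1, le_of_lt hy.2⟩
      have hcw : ContinuousWithinAt f (Set.Ioi (0:ℝ)) 0 :=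
        (hfc.continuousWithinAt ⟨le_refl 0, hT.le⟩).mono_of_mem_nhdsWithin hmem
      have hmeas : StronglyMeasurableAtFilter f (nhdsWithin (0:ℝ) (Set.Ioi 0)) :=
        ⟨Set.Icc 0 T, hmem, (hfc.aestronglyMeasurable measurableSet_Icc)⟩
      exact intervalIntegral.integral_hasDerivWithinAt_right
        IntervalIntegrable.refl hmeas hcw
    · have hmem : Set.Icc (0:ℝ) T ∈ nhds x :=
        Icc_mem_nhds h0 hx.2
      have hca : ContinuousAt f x := hfc.continuousAt hmem
      have hint : IntervalIntegrable f volume 0 x :=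
        hfint.mono_set (by rw [hIcc, Set.uIcc_of_le hx.1]; exact Set.Icc_subset_Icc_right hx.2.le)
      exact (intervalIntegral.integral_hasDerivAt_right hint ⟨Set.Icc 0 T, hmem,
        hfc.aestronglyMeasurable measurableSet_Icc⟩ hca).hasDerivWithinAt
  -- G := P * exp(-H) is constant
  set G : ℝ → ℝ := fun t => P t * exp (-(H t)) with hGdef
  have hGc : ContinuousOn G (Set.Icc 0 T) :=
    hPc.mul ((Real.continuous_exp.comp_continuousOn hHc.neg))
  have hGd : ∀ x ∈ Set.Ico (0:ℝ) T, HasDerivWithinAt G 0 (Set.Ici x) x := by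
    intro x hx
    have hx' : x ∈ Set.Icc (0:ℝ) T := ⟨hx.1, hx.2.le⟩
    have hP := (hPode x hx').hasDerivWithinAt (s := Set.Ici x)
    have hE : HasDerivWithinAt (fun t => exp (-(H t))) (exp (-(H x)) * (-(f x)))
        (Set.Ici x) x := by
      have := ((hHd x hx).neg).exp
      simpa using this
    have := hP.fun_mul hE
    refine this.congr_deriv ?_
    simp only [hf]
    field_simp
    ring
  have hGconst := constant_of_has_deriv_right_zero hGc hGd
  have hP0 : P 0 = exp (-(H T)) := by
    have := hGconst T ⟨hT.le, le_refl T⟩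
    simp only [hGdef, hPT, hH0, one_mul] at this
    simpa [Real.exp_ne_zero] using this.symm
  have hPval : ∀ t ∈ Set.Icc (0:ℝ) T, P t = exp (-(H T)) * exp (H t) := by
    intro t ht
    have := hGconst t ht
    simp only [hGdef, hH0] at this
    have h2 : P t * exp (-(H t)) = P 0 := by simpa using this
    rw [hP0] at h2
    have hne : exp (-(H t)) ≠ 0 := Real.exp_ne_zero _
    field_simp [Real.exp_neg] at h2 ⊢
    field_simp [Real.exp_neg] at hne
    rw [← h2, mul_assoc, ← Real.exp_add]; simp
  have hPpos : ∀ t ∈ Set.Icc (0:ℝ) T, 0 < P t := by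
    intro t ht
    rw [hPval t ht]
    positivity
  -- K := exp(-t) * P t, K' = g
  set g : ℝ → ℝ := fun s => ρ * (exp (-s) / c s) * (P s)^2 with hg
  have hKd : ∀ t ∈ Set.uIcc (0:ℝ) T, HasDerivAt (fun s => exp (-s) * P s) (g t) t := by
    intro t ht
    rw [hIcc] at ht
    have h1 : HasDerivAt (fun s : ℝ => exp (-s)) (-exp (-t)) t := by
      simpa using ((hasDerivAt_id t).neg.exp)
    have := h1.fun_mul (hPode t ht)
    refine this.congr_deriv ?_
    have := hcne t ht
    simp only [hg]
    field_simp
    ring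
  have hgc : ContinuousOn g (Set.Icc 0 T) := by
    apply ContinuousOn.mul
    · exact continuousOn_const.mul
        ((Real.continuous_exp.comp continuous_neg).continuousOn.div hcc hcne)
    · exact hPc.pow 2
  have hgint : IntervalIntegrable g volume 0 T :=
    ContinuousOn.intervalIntegrable (by rw [hIcc]; exact hgc)
  have hFTC : (∫ s in (0:ℝ)..T, g s) = exp (-T) - P 0 := by
    rw [intervalIntegral.integral_eq_sub_of_hasDerivAt hKd hgint, hPT]
    simp
  -- rewrite the α-integral
  have hcong : (∫ s in (0:ℝ)..T, (exp (-s) / c s) * exp (H s) * P s)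
      = (exp (H T) / ρ) * ∫ s in (0:ℝ)..T, g s := by
    rw [← intervalIntegral.integral_const_mul]
    apply intervalIntegral.integral_congr
    intro s hs
    rw [hIcc] at hs
    have hPs := hPval s hs
    simp only [hg]
    rw [hPs]
    have h1 : exp (-(H T)) = (exp (H T))⁻¹ := Real.exp_neg _
    rw [h1]
    have h2 : exp (H T) ≠ 0 := Real.exp_ne_zero _
    field_simp [h2, hρ.ne', hcne s hs]
  have hkey : 1 - ρ * α = exp T * P 0 := by
    rw [hα, hcong, hFTC, hP0]
    rw [Real.exp_add, Real.exp_neg (H T), Real.exp_neg T]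
    have h2 : exp (H T) ≠ 0 := Real.exp_ne_zero _
    have h3 : exp T ≠ 0 := Real.exp_ne_zero _
    field_simp
    ring
  refine ⟨hkey, ?_⟩
  rw [hkey, hP0]
  positivity
end

section
/- Let c^Y, c^H, m > 0, T > 0. Define for each constant cost c the large-ρ limits p(c) = c·e^{-T}/(1-e^{-T}) and d(c) = (c·m/(1-e^{-T}))·(1-e^{-T}-T·e^{-T}), and b(c) = (c·m/(1-e^{-T}))·(T-(1-e^{-T})). Under the spot-parity constraint (e^T-1)·(p(c^Y)-p(c^H))·𝔡̄ - (b(c^Y)-b(c^H)) - (d(c^Y)-d(c^H)) = 0 with 𝔡̄ determined by this equation, the limiting forward differential equals (p(c^Y)-p(c^H))·𝔡̄ + (d(c^Y)-d(c^H)) = m·(c^Y - c^H). In particular, if c^Y > c^H then the limiting forward differential is strictly positive. -/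
open Real

theorem deterministic_benchmark_forward_differential
    (cY cH m T d : ℝ) (hcY : 0 < cY) (hcH : 0 < cH) (hm : 0 < m) (hT : 0 < T)
    (p dd b : ℝ → ℝ)
    (hp : ∀ c, p c = c * exp (-T) / (1 - exp (-T)))
    (hd : ∀ c, dd c = (c * m / (1 - exp (-T))) * (1 - exp (-T) - T * exp (-T)))
    (hb : ∀ c, b c = (c * m / (1 - exp (-T))) * (T - (1 - exp (-T))))
    (hparity : (exp T - 1) * (p cY - p cH) * d - (b cY - b cH) - (dd cY - dd cH) = 0) :
    (p cY - p cH) * d + (dd cY - dd cH) = m * (cY - cH) ∧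
    (cH < cY → 0 < (p cY - p cH) * d + (dd cY - dd cH)) := by
  have hu0 : 0 < exp (-T) := exp_pos _
  have hu1 : exp (-T) < 1 := exp_lt_one_iff.mpr (by linarith)
  have hne : (1 : ℝ) - exp (-T) ≠ 0 := by linarith
  have hE : exp T = (exp (-T))⁻¹ := by rw [← Real.exp_neg, neg_neg]
  simp only [hp, hd, hb, hE] at hparity ⊢
  have hu0' : exp (-T) ≠ 0 := ne_of_gt hu0
  have hmain : (cY * exp (-T) / (1 - exp (-T)) - cH * exp (-T) / (1 - exp (-T))) * d +
      ((cY * m / (1 - exp (-T))) * (1 - exp (-T) - T * exp (-T)) -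
       (cH * m / (1 - exp (-T))) * (1 - exp (-T) - T * exp (-T))) = m * (cY - cH) := by
    field_simp at hparity
    have hx : exp (-T) * (1 - exp (-T)) ^ 3 ≠ 0 :=
      mul_ne_zero hu0' (pow_ne_zero 3 hne)
    have hkey : (cY - cH) * d = m * (cY - cH) * T := by
      apply mul_left_cancel₀ hx
      linear_combination exp (-T) * (1 - exp (-T)) ^ 2 * hparity
    field_simp
    linear_combination exp (-T) * hkey
  refine ⟨hmain, fun hlt => ?_⟩
  rw [hmain]
  have : 0 < cY - cH := by linarith
  positivity
end
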